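/- Let n ≥ 3 and 1 ≤ v ≤ n−2 be natural numbers, and let λ > 0 be a real number. Let S be a set of ordered pairs of indices in Fin n × Fin n containing no diagonal pair (i,i), such that for every row index i there are exactly v pairs of the form (i,j) in S. Let A and B be n×n real matrices with nonnegative entries such that A i j = 0 whenever (i,j) ∉ S, and B i j = 0 whenever i = j or (i,j) ∈ S. If ‖A‖ + ‖B‖/2 = λ·n, then (n−1) · max_{i,j} (A + B) i j ≥ (2 − 2v/(n−1+v))·λ. (Corollary 1: lower bound for the rr-sys DCT on demand matrices of type M(v).) -/

import Mathlib

open Matrix BigOperators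

/-- Corollary 1 (lower bound for the rr-sys DCT on demand matrices of type
`M(v)`): `S` is the support of the demand, consisting of exactly `v`
off-diagonal cells in each row; `A` is the direct one-hop traffic (supported on
`S`), `B` the per-edge load of two-hop traffic (supported off `S` and off the
diagonal). Completeness forces `‖A‖ + ‖B‖/2 = λ·n`, and the completion time,
which is at least `(n-1)` times the maximal per-edge load of `A + B`, is at
least `(2 - 2v/(n-1+v))·λ`. -/
theorem rr_sys_dct_lower_bound_Mv (n v : ℕ) (hn : 3 ≤ n)
    (hv1 : 1 ≤ v) (hv2 : v ≤ n - 2)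
    (lam : ℝ) (hlam : 0 < lam)
    (S : Finset (Fin n × Fin n))
    (hSdiag : ∀ i : Fin n, (i, i) ∉ S)
    (hSrow : ∀ i : Fin n, (S.filter (fun p => p.1 = i)).card = v)
    (A B : Matrix (Fin n) (Fin n) ℝ)
    (hA : ∀ i j, 0 ≤ A i j) (hB : ∀ i j, 0 ≤ B i j)
    (hAsupp : ∀ i j, (i, j) ∉ S → A i j = 0)
    (hBsupp : ∀ i j, i = j ∨ (i, j) ∈ S → B i j = 0)
    (hweight : (∑ i, ∑ j, A i j) + (∑ i, ∑ j, B i j) / 2 = lam * n) :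
    (2 - 2 * (v : ℝ) / ((n : ℝ) - 1 + v)) * lam
      ≤ ((n : ℝ) - 1) * (⨆ i, ⨆ j, (A + B) i j) := by
  have hnpos : 0 < n := by omega
  set m : ℝ := ⨆ i, ⨆ j, (A + B) i j with hm
  have hle : ∀ i j : Fin n, (A + B) i j ≤ m := by
    intro i j
    have h1 : (A + B) i j ≤ ⨆ j, (A + B) i j :=
      le_ciSup (Set.Finite.bddAbove (Set.finite_range _)) j
    exact h1.trans (le_ciSup (f := fun i => ⨆ j, (A + B) i j)
      (Set.Finite.bddAbove (Set.finite_range _)) i)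
  have hAm : ∀ i j, A i j ≤ m := by
    intro i j
    have : A i j ≤ A i j + B i j := le_add_of_nonneg_right (hB i j)
    exact this.trans (hle i j)
  have hBm : ∀ i j, B i j ≤ m := by
    intro i j
    have : B i j ≤ A i j + B i j := le_add_of_nonneg_left (hA i j)
    exact this.trans (hle i j)
  have hm0 : 0 ≤ m := le_trans (hA ⟨0, hnpos⟩ ⟨0, hnpos⟩) (hAm _ _)
  -- cardinality of support row
  have hcardS : ∀ i : Fin n,
      (Finset.univ.filter (fun j => (i, j) ∈ S)).card = v := by
    intro i
    rw [← hSrow i]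
    apply Finset.card_bij (fun j _ => (i, j))
    · intro j hj
      rw [Finset.mem_filter] at hj ⊢
      exact ⟨hj.2, rfl⟩
    · intro a _ b _ hab
      exact (Prod.ext_iff.1 hab).2
    · intro p hp
      simp only [Finset.mem_filter] at hp
      exact ⟨p.2, by simp [hp.1, ← hp.2], by rw [← hp.2]⟩
  have hcardB : ∀ i : Fin n,
      (Finset.univ.filter (fun j => ¬((i, j) ∈ S ∨ j = i))).card = n - 1 - v := by
    intro i
    have hsplit := Finset.card_filter_add_card_filter_not
      (s := (Finset.univ : Finset (Fin n))) (p := fun j => (i, j) ∈ S ∨ j = i)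
    have hcard2 : (Finset.univ.filter (fun j => (i, j) ∈ S ∨ j = i)).card = v + 1 := by
      rw [Finset.filter_or, Finset.card_union_of_disjoint]
      · rw [hcardS i]
        simp [Finset.filter_eq']
      · rw [Finset.disjoint_left]
        intro a ha ha'
        simp only [Finset.mem_filter, Finset.mem_univ, true_and] at ha ha'
        exact hSdiag i (ha' ▸ ha)
    rw [hcard2] at hsplit
    have : Finset.univ.card = n := Finset.card_univ.trans (Fintype.card_fin n)
    omega
  -- row sum bounds
  have hrowA : ∀ i : Fin n, ∑ j, A i j ≤ (v : ℝ) * m := by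
    intro i
    have h1 : ∑ j, A i j = ∑ j ∈ Finset.univ.filter (fun j => (i, j) ∈ S), A i j := by
      rw [Finset.sum_filter]
      apply Finset.sum_congr rfl
      intro j _
      by_cases h : (i, j) ∈ S
      · simp [h]
      · simp [h, hAsupp i j h]
    rw [h1]
    calc ∑ j ∈ Finset.univ.filter (fun j => (i, j) ∈ S), A i j
        ≤ (Finset.univ.filter (fun j => (i, j) ∈ S)).card • m :=
          Finset.sum_le_card_nsmul _ _ m (fun j _ => hAm i j)
      _ = (v : ℝ) * m := by rw [hcardS i]; simp [nsmul_eq_mul]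
  have hrowB : ∀ i : Fin n, ∑ j, B i j ≤ ((n : ℝ) - 1 - v) * m := by
    intro i
    have h1 : ∑ j, B i j
        = ∑ j ∈ Finset.univ.filter (fun j => ¬((i, j) ∈ S ∨ j = i)), B i j := by
      rw [Finset.sum_filter]
      apply Finset.sum_congr rfl
      intro j _
      by_cases h : (i, j) ∈ S ∨ j = i
      · have : B i j = 0 := by
          apply hBsupp
          rcases h with h | h
          · exact Or.inr h
          · exact Or.inl h.symm
        simp [h, this]
      · simp [h]
    rw [h1]
    have hcast : ((n - 1 - v : ℕ) : ℝ) = (n : ℝ) - 1 - v := by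
      rw [Nat.cast_sub (show v ≤ n - 1 by omega), Nat.cast_sub (show 1 ≤ n by omega)]
      norm_num
    calc ∑ j ∈ Finset.univ.filter (fun j => ¬((i, j) ∈ S ∨ j = i)), B i j
        ≤ (Finset.univ.filter (fun j => ¬((i, j) ∈ S ∨ j = i))).card • m :=
          Finset.sum_le_card_nsmul _ _ m (fun j _ => hBm i j)
      _ = ((n : ℝ) - 1 - v) * m := by rw [hcardB i, nsmul_eq_mul, hcast]
  have hAtot : ∑ i, ∑ j, A i j ≤ (n : ℝ) * ((v : ℝ) * m) := by
    calc ∑ i, ∑ j, A i j ≤ ∑ i : Fin n, (v : ℝ) * m :=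
          Finset.sum_le_sum (fun i _ => hrowA i)
      _ = (n : ℝ) * ((v : ℝ) * m) := by simp [mul_comm]
  have hBtot : ∑ i, ∑ j, B i j ≤ (n : ℝ) * (((n : ℝ) - 1 - v) * m) := by
    calc ∑ i, ∑ j, B i j ≤ ∑ i : Fin n, ((n : ℝ) - 1 - v) * m :=
          Finset.sum_le_sum (fun i _ => hrowB i)
      _ = (n : ℝ) * (((n : ℝ) - 1 - v) * m) := by simp [mul_comm]
  have hkey : lam * n ≤ (n : ℝ) * m * ((n : ℝ) - 1 + v) / 2 := by
    rw [← hweight]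
    nlinarith [hAtot, hBtot]
  have hnR : (3 : ℝ) ≤ (n : ℝ) := by exact_mod_cast hn
  have hvR : (1 : ℝ) ≤ (v : ℝ) := by exact_mod_cast hv1
  have hc : (0 : ℝ) < (n : ℝ) - 1 + v := by linarith
  have hnpos' : (0 : ℝ) < (n : ℝ) := by linarith
  have hm2 : 2 * lam ≤ m * ((n : ℝ) - 1 + v) := by
    have := hkey
    nlinarith
  have hgoal : (2 - 2 * (v : ℝ) / ((n : ℝ) - 1 + v)) * lam
      = 2 * ((n : ℝ) - 1) / ((n : ℝ) - 1 + v) * lam := by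
    field_simp
    ring_nf
  rw [hgoal, div_mul_eq_mul_div, div_le_iff₀ hc]
  nlinarith
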